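/- Let h₊ : ℝ → Matrix (Fin n) (Fin n) ℂ be a differentiable, 2π-periodic family of invertible matrices, let T be an invertible n×n complex matrix, and define the time-reversal partner h₋(k) = T · conj(h₊(−k)) · T⁻¹, where conj denotes the entrywise complex conjugate of a matrix. Then ∫₀^{2π} Tr[h₋(k)⁻¹ · (deriv h₋ k)] dk = −conj(∫₀^{2π} Tr[h₊(k)⁻¹ · (deriv h₊ k)] dk); hence the 1D winding numbers satisfy w₁[h₋] = conj(w₁[h₊]) (so that, winding numbers being real integers, w₁[h₊] = w₁[h₋], the situation of 1D class AI with anticommuting sublattice symmetry, AI + S₋). -/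

import Mathlib

open Matrix MeasureTheory intervalIntegral

/-- Entrywise derivative of a one-parameter family of matrices. -/
noncomputable def matDeriv {m : Type*} (h : ℝ → Matrix m m ℂ) (k : ℝ) : Matrix m m ℂ :=
  Matrix.of fun i j => deriv (fun t => h t i j) k

/-- The 1D winding number `w₁[h] = (1/(2πi)) ∫₀^{2π} Tr[h(k)⁻¹ · h'(k)] dk` of a family of
invertible matrices, with `h'` the entrywise derivative. -/
noncomputable def w1 {m : Type*} [Fintype m] [DecidableEq m] (h : ℝ → Matrix m m ℂ) : ℂ :=
  (1 / (2 * Real.pi * Complex.I)) *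
    ∫ k in (0 : ℝ)..(2 * Real.pi), ((h k)⁻¹ * matDeriv h k).trace

lemma intervalIntegral_conj (f : ℝ → ℂ) (a b : ℝ) :
    (∫ x in a..b, (starRingEnd ℂ) (f x)) = (starRingEnd ℂ) (∫ x in a..b, f x) := by
  simp [intervalIntegral, ← integral_conj, map_sub]

set_option maxHeartbeats 1000000 in
/-- For a differentiable, 2π-periodic family of invertible matrices `h₊`, an
invertible matrix `T`, and the time-reversal partner `h₋(k) = T · conj(h₊(−k)) · T⁻¹` (with
`conj` the entrywise complex conjugate), the trace integrals satisfy
`∫₀^{2π} Tr[h₋⁻¹ h₋'] = −conj(∫₀^{2π} Tr[h₊⁻¹ h₊'])`; hence `w₁[h₋] = conj(w₁[h₊])`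
(1D class AI with anticommuting sublattice symmetry, AI + S₋). -/
theorem winding_number_time_reversal_partner
    {n : ℕ} (hp : ℝ → Matrix (Fin n) (Fin n) ℂ)
    (hdiff : ∀ i j, Differentiable ℝ fun k => hp k i j)
    (hper : ∀ k : ℝ, hp (k + 2 * Real.pi) = hp k)
    (hunit : ∀ k, IsUnit (hp k))
    (T : Matrix (Fin n) (Fin n) ℂ) (hT : IsUnit T)
    (hm : ℝ → Matrix (Fin n) (Fin n) ℂ)
    (hrel : ∀ k : ℝ, hm k = T * (hp (-k)).map (starRingEnd ℂ) * T⁻¹) :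
    (∫ k in (0 : ℝ)..(2 * Real.pi), ((hm k)⁻¹ * matDeriv hm k).trace) =
      -(starRingEnd ℂ) (∫ k in (0 : ℝ)..(2 * Real.pi), ((hp k)⁻¹ * matDeriv hp k).trace) ∧
    w1 hm = (starRingEnd ℂ) (w1 hp) := by
  have hdet : ∀ k, IsUnit (hp k).det := fun k => (Matrix.isUnit_iff_isUnit_det _).mp (hunit k)
  have hTdet : IsUnit T.det := (Matrix.isUnit_iff_isUnit_det _).mp hT
  set C := starRingEnd ℂ with hC
  -- derivative of entries of hm
  have hd : ∀ (k : ℝ) (a b : Fin n),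
      HasDerivAt (fun t => C (hp (-t) a b)) (-(C (matDeriv hp (-k) a b))) k := by
    intro k a b
    have h1 : HasDerivAt (fun t => hp t a b) (matDeriv hp (-k) a b) (-k) := by
      simpa [matDeriv] using ((hdiff a b) (-k)).hasDerivAt
    have h2 : HasDerivAt (fun t => hp (-t) a b) (-(matDeriv hp (-k) a b)) k := by
      have := HasDerivAt.scomp (𝕜 := ℝ) k h1 (hasDerivAt_neg k)
      simpa [Function.comp_def, mul_neg_one] using this
    simpa only [hC, starRingEnd_apply, star_neg] using h2.star
  have hmd : ∀ k, matDeriv hm k = -(T * (matDeriv hp (-k)).map C * T⁻¹) := by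
    intro k
    ext i j
    have H : HasDerivAt (fun t => hm t i j)
        (∑ b, (∑ a, T i a * -(C (matDeriv hp (-k) a b))) * T⁻¹ b j) k := by
      have heq : (fun t => hm t i j)
          = fun t => ∑ b, (∑ a, T i a * C (hp (-t) a b)) * T⁻¹ b j := by
        funext t
        rw [hrel]
        simp [Matrix.mul_apply, Matrix.map_apply]
      rw [heq]
      exact HasDerivAt.fun_sum fun b _ =>
        (HasDerivAt.fun_sum fun a _ => ((hd k a b).const_mul (T i a))).mul_const _
    rw [matDeriv, Matrix.of_apply, H.deriv]
    simp [Matrix.mul_apply, Matrix.map_apply, Finset.sum_mul, mul_neg, neg_mul]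
  -- inverse of hm
  have hminv : ∀ k, (hm k)⁻¹ = T * ((hp (-k))⁻¹).map C * T⁻¹ := by
    intro k
    apply Matrix.inv_eq_right_inv
    rw [hrel]
    calc T * (hp (-k)).map C * T⁻¹ * (T * ((hp (-k))⁻¹).map C * T⁻¹)
        = T * ((hp (-k)).map C * (T⁻¹ * T) * ((hp (-k))⁻¹).map C) * T⁻¹ := by
          noncomm_ring
      _ = 1 := by
          rw [Matrix.nonsing_inv_mul T hTdet, mul_one, ← Matrix.map_mul,
            Matrix.mul_nonsing_inv _ (hdet (-k))]
          simp [Matrix.mul_nonsing_inv T hTdet]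
  -- key pointwise identity
  have key : ∀ k, ((hm k)⁻¹ * matDeriv hm k).trace
      = -(C (((hp (-k))⁻¹ * matDeriv hp (-k)).trace)) := by
    intro k
    rw [hminv, hmd]
    have : T * ((hp (-k))⁻¹).map C * T⁻¹ * -(T * (matDeriv hp (-k)).map C * T⁻¹)
        = -(T * (((hp (-k))⁻¹ * matDeriv hp (-k)).map C) * T⁻¹) := by
      rw [Matrix.map_mul]
      calc T * ((hp (-k))⁻¹).map C * T⁻¹ * -(T * (matDeriv hp (-k)).map C * T⁻¹)
          = -(T * (((hp (-k))⁻¹).map C * (T⁻¹ * T) * (matDeriv hp (-k)).map C) * T⁻¹) := by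
            noncomm_ring
        _ = _ := by rw [Matrix.nonsing_inv_mul T hTdet, mul_one, Matrix.mul_assoc T]
    rw [this, Matrix.trace_neg, Matrix.trace_mul_cycle,
      Matrix.nonsing_inv_mul T hTdet, Matrix.one_mul]
    congr 1
    exact (AddMonoidHom.map_trace C _).symm
  -- periodicity of the integrand for hp
  have fper : Function.Periodic (fun k => ((hp k)⁻¹ * matDeriv hp k).trace) (2 * Real.pi) := by
    intro k
    have hmdper : matDeriv hp (k + 2 * Real.pi) = matDeriv hp k := by
      ext i j
      rw [matDeriv, matDeriv, Matrix.of_apply, Matrix.of_apply, ← deriv_comp_add_const]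
      congr 1
      funext t
      rw [hper]
    simp only [hper, hmdper]
  have main : (∫ k in (0 : ℝ)..(2 * Real.pi), ((hm k)⁻¹ * matDeriv hm k).trace) =
      -C (∫ k in (0 : ℝ)..(2 * Real.pi), ((hp k)⁻¹ * matDeriv hp k).trace) := by
    have h1 : (∫ k in (0 : ℝ)..(2 * Real.pi), ((hm k)⁻¹ * matDeriv hm k).trace)
        = -C (∫ k in (0 : ℝ)..(2 * Real.pi), ((hp (-k))⁻¹ * matDeriv hp (-k)).trace) := by
      simp only [key]
      rw [intervalIntegral.integral_neg, _root_.intervalIntegral_conj]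
    rw [h1]
    congr 1
    congr 1
    rw [intervalIntegral.integral_comp_neg fun k => ((hp k)⁻¹ * matDeriv hp k).trace]
    have := fper.intervalIntegral_add_eq (-(2 * Real.pi)) 0
    simpa using this
  refine ⟨main, ?_⟩
  rw [w1, w1, main, _root_.map_mul]
  rw [show (starRingEnd ℂ) (1 / (2 * Real.pi * Complex.I)) = -(1 / (2 * Real.pi * Complex.I)) by
    rw [map_div₀, _root_.map_one,
      show (starRingEnd ℂ) (2 * Real.pi * Complex.I) = -(2 * Real.pi * Complex.I) by
        rw [_root_.map_mul, _root_.map_mul, Complex.conj_I, Complex.conj_ofReal, map_ofNat]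
        ring,
      div_neg]]
  ring
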